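/- Let L > 0 and let W : [0,∞) → [0,∞) be differentiable with W'(t) ≤ −L·W(t)/(1 + √(W(t))) for all t ≥ 0. Then for all t ≥ 0: W(t) ≤ W(0)·exp(max(0, W(0) − 1))·exp(−(L/2)·t). -/

import Mathlib

/-- Integration of the structural differential inequality (7.51): from
`W' ≤ -L·W/(1 + √W)` on `[0,∞)` with `W ≥ 0`, one gets
`W(t) ≤ W(0)·e^{max(0, W(0)-1)}·e^{-(L/2)t}`. -/
theorem stmt_13 (L : ℝ) (hL : 0 < L) (W W' : ℝ → ℝ)
    (hW0 : ∀ t, 0 ≤ t → 0 ≤ W t)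
    (hW : ∀ t, 0 ≤ t → HasDerivAt W (W' t) t)
    (hW' : ∀ t, 0 ≤ t → W' t ≤ -L * W t / (1 + Real.sqrt (W t))) :
    ∀ t, 0 ≤ t →
      W t ≤ W 0 * Real.exp (max 0 (W 0 - 1)) * Real.exp (-(L / 2) * t) := by
  intro t ht
  have hW00 : 0 ≤ W 0 := hW0 0 le_rfl
  rcases (hW0 t ht).eq_or_lt with h0 | hpos
  · rw [← h0]; positivity
  -- W is antitone on [0,∞)
  have hWanti : AntitoneOn W (Set.Ici 0) := by
    apply antitoneOn_of_hasDerivWithinAt_nonpos (convex_Ici 0) (f' := W')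
    · exact fun x hx => (hW x hx).continuousAt.continuousWithinAt
    · intro x hx
      rw [interior_Ici] at hx
      exact (hW x (le_of_lt hx)).hasDerivWithinAt
    · intro x hx
      rw [interior_Ici] at hx
      have hx' : (0:ℝ) ≤ x := le_of_lt hx
      refine (hW' x hx').trans ?_
      apply div_nonpos_of_nonpos_of_nonneg
      · nlinarith [hW0 x hx']
      · nlinarith [Real.sqrt_nonneg (W x)]
  have hw0pos : 0 < W 0 := lt_of_lt_of_le hpos (hWanti (Set.self_mem_Ici) ht ht)
  have hposIcc : ∀ τ ∈ Set.Icc (0:ℝ) t, 0 < W τ := fun τ hτ =>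
    lt_of_lt_of_le hpos (hWanti hτ.1 ht hτ.2)
  -- the Lyapunov-like functional g = log W + 2√W + Lτ is antitone on [0,t]
  set g : ℝ → ℝ := fun τ => Real.log (W τ) + 2 * Real.sqrt (W τ) + L * τ with hgdef
  have hganti : AntitoneOn g (Set.Icc 0 t) := by
    apply antitoneOn_of_hasDerivWithinAt_nonpos (convex_Icc 0 t)
      (f' := fun τ => W' τ / W τ + 2 * (W' τ / (2 * Real.sqrt (W τ))) + L * 1)
    · intro x hx
      have hne : W x ≠ 0 := (hposIcc x hx).ne'
      have h1 := ((hW x hx.1).log hne).add (((hW x hx.1).sqrt hne).const_mul 2)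
      have h3 : HasDerivAt (fun τ : ℝ => L * τ) (L * 1) x := (hasDerivAt_id x).const_mul L
      exact (h1.add h3).continuousAt.continuousWithinAt
    · intro x hx
      rw [interior_Icc] at hx
      have hxI : x ∈ Set.Icc (0:ℝ) t := ⟨hx.1.le, hx.2.le⟩
      have hne : W x ≠ 0 := (hposIcc x hxI).ne'
      have h1 := ((hW x hxI.1).log hne).add (((hW x hxI.1).sqrt hne).const_mul 2)
      have h3 : HasDerivAt (fun τ : ℝ => L * τ) (L * 1) x := (hasDerivAt_id x).const_mul L
      exact (h1.add h3).hasDerivWithinAt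
    · intro x hx
      rw [interior_Icc] at hx
      have hxI : x ∈ Set.Icc (0:ℝ) t := ⟨hx.1.le, hx.2.le⟩
      have hwpos : 0 < W x := hposIcc x hxI
      set r := Real.sqrt (W x) with hrdef
      have hr : 0 < r := Real.sqrt_pos.2 hwpos
      have hr2 : r ^ 2 = W x := Real.sq_sqrt hwpos.le
      have hle := hW' x hxI.1
      have key : W' x * (1 + r) ≤ -L * W x := by
        have h1r : (0:ℝ) < 1 + r := by linarith
        exact (le_div_iff₀ h1r).1 hle
      have e : W' x / W x + 2 * (W' x / (2 * r)) + L * 1 =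
          (W' x * (1 + r) + L * r ^ 2) / r ^ 2 := by
        rw [← hr2]; field_simp
      rw [e]
      apply div_nonpos_of_nonpos_of_nonneg
      · nlinarith
      · positivity
  have hgle : g t ≤ g 0 := hganti ⟨le_rfl, ht⟩ ⟨ht, le_rfl⟩ ht
  -- algebraic conclusion
  set w0 := W 0 with hw0def
  set w := W t with hwdef
  set u0 := Real.sqrt w0 with hu0def
  set u := Real.sqrt w with hudef
  set M := max 0 (w0 - 1) with hMdef
  have hu0 : 0 < u0 := Real.sqrt_pos.2 hw0pos
  have hu : 0 < u := Real.sqrt_pos.2 hpos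
  have hwle : w ≤ w0 := hWanti Set.self_mem_Ici ht ht
  have huleu0 : u ≤ u0 := Real.sqrt_le_sqrt hwle
  have hu0sq : u0 ^ 2 = w0 := Real.sq_sqrt hw0pos.le
  have hD0 : 0 ≤ Real.log u0 - Real.log u := sub_nonneg.2 (Real.log_le_log hu huleu0)
  -- key inequality : u0 - u ≤ (log u0 - log u) + M
  have key : u0 - u ≤ (Real.log u0 - Real.log u) + M := by
    have h5 : Real.log (u / u0) ≤ u / u0 - 1 :=
      Real.log_le_sub_one_of_pos (by positivity)
    rw [Real.log_div hu.ne' hu0.ne'] at h5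
    have h6 : u0 * (Real.log u - Real.log u0) ≤ u - u0 := by
      have hh := mul_le_mul_of_nonneg_left h5 hu0.le
      have e2 : u0 * (u / u0 - 1) = u - u0 := by field_simp
      linarith
    rcases le_total u0 1 with h | h
    · have hM : 0 ≤ M := le_max_left _ _
      nlinarith [mul_nonneg (sub_nonneg.2 h) hD0]
    · have hM : u0 ^ 2 - 1 ≤ M := by rw [hu0sq]; exact le_max_right _ _
      nlinarith [mul_nonneg (sub_nonneg.2 h) hD0, mul_nonneg (sub_nonneg.2 h) hu.le,
        mul_nonneg (sub_nonneg.2 h) hu0.le]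
  have hgle' : Real.log w + 2 * u + L * t ≤ Real.log w0 + 2 * u0 + L * 0 := hgle
  have e1 : Real.log u0 - Real.log u = (Real.log w0 - Real.log w) / 2 := by
    rw [hu0def, hudef, Real.log_sqrt hw0pos.le, Real.log_sqrt hpos.le]; ring
  have hlogw : Real.log w ≤ Real.log w0 + M - L / 2 * t := by
    rw [e1] at key; linarith
  calc w = Real.exp (Real.log w) := (Real.exp_log hpos).symm
    _ ≤ Real.exp (Real.log w0 + M - L / 2 * t) := Real.exp_le_exp.2 hlogw
    _ = w0 * Real.exp M * Real.exp (-(L / 2) * t) := by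
        rw [show Real.log w0 + M - L / 2 * t = Real.log w0 + (M + -(L / 2) * t) by ring,
          Real.exp_add, Real.exp_add, Real.exp_log hw0pos]; ring
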